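/- Lemma (cumulative primal utility lower bound, equation (th16)). Suppose there is R_P ≥ 0 such that for every x ∈ X and every p ∈ [0,1], p·∑_{t∈T_G} L_t(x) + (1−p)·∑_{t∈T_G} L_t(x₀) − ∑_{t∈T_G} L_t(x_t) ≤ R_P. Then ∑_{t∈T_G} L_t(x_t) ≥ (ν/(1+β)) · sup_{x∈X} ∑_{t=1}^T f_t(x) − |T₀| − R_P. -/
import Mathlib


/-- Lemma (cumulative primal utility lower bound, equation (th16)). If the primal regret
over `T_G` against mixtures of any `x` and the void action is at most `R_P`, then
`∑_{t∈T_G} L_t(x_t) ≥ (ν/(1+β)) · sup_x ∑_{t=1}^T f_t(x) − |T₀| − R_P`. -/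
theorem stmt_4 (T m : ℕ) (hT : 1 ≤ T) (hm : 1 ≤ m)
    (X : Type*) [Nonempty X] (x₀ : X)
    (β ρ : ℝ) (hβ : 0 ≤ β) (hρ0 : 0 < ρ) (hρ1 : ρ ≤ 1)
    (f : ℕ → X → ℝ)
    (hf0 : ∀ t ∈ Finset.Icc 1 T, ∀ x, 0 ≤ f t x)
    (hf1 : ∀ t ∈ Finset.Icc 1 T, ∀ x, f t x ≤ 1)
    (c : ℕ → X → Fin m → ℝ)
    (hc : ∀ t ∈ Finset.Icc 1 T, ∀ x i, |c t x i| ≤ 1)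
    (hcx₀ : ∀ t ∈ Finset.Icc 1 T, ∀ i, c t x₀ i ≤ -β)
    (x : ℕ → X) (lam : ℕ → Fin m → ℝ)
    (hlam : ∀ t ∈ Finset.Icc 1 T, ∀ i, 0 ≤ lam t i)
    (Bud : ℕ → Fin m → ℝ)
    (hB1 : ∀ i, Bud 1 i = T * ρ)
    (hBrec : ∀ t ∈ Finset.Icc 1 T, ∀ i, Bud (t + 1) i = Bud t i - c t (x t) i)
    (T0 TG TGlt TGgt : Finset ℕ) (τ : ℕ)
    (hT0 : ∀ t, t ∈ T0 ↔ t ∈ Finset.Icc 1 T ∧ ∃ i, Bud t i < 1)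
    (hTG : TG = Finset.Icc 1 T \ T0)
    (hτ : τ = T0.sup id)
    (hTGlt : TGlt = TG.filter (fun t => t ≤ τ))
    (hTGgt : TGgt = Finset.Icc (τ + 1) T)
    (hvoid : ∀ t ∈ T0, x t = x₀)
    -- primal regret hypothesis
    (RP : ℝ) (hRP : 0 ≤ RP)
    (hprimal : ∀ x' : X, ∀ p : ℝ, 0 ≤ p → p ≤ 1 →
      p * (∑ t ∈ TG, (f t x' + ∑ i, lam t i * (ρ - c t x' i)))
        + (1 - p) * (∑ t ∈ TG, (f t x₀ + ∑ i, lam t i * (ρ - c t x₀ i)))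
        - ∑ t ∈ TG, (f t (x t) + ∑ i, lam t i * (ρ - c t (x t) i)) ≤ RP) :
    ∑ t ∈ TG, (f t (x t) + ∑ i, lam t i * (ρ - c t (x t) i)) ≥
      ((β + ρ) / (1 + β)) * (⨆ x' : X, ∑ t ∈ Finset.Icc 1 T, f t x')
        - T0.card - RP :=  by
  have h1β : (0:ℝ) < 1 + β := by linarith
  set p : ℝ := (β + ρ) / (1 + β) with hp
  have hp0 : 0 < p := div_pos (by linarith) h1β
  have hp1 : p ≤ 1 := by rw [hp, div_le_one h1β]; linarith
  have hpb : p * (1 + β) = β + ρ := by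
    rw [hp]; field_simp
  have hTGsub : TG ⊆ Finset.Icc 1 T := by rw [hTG]; exact Finset.sdiff_subset
  have hT0sub : T0 ⊆ Finset.Icc 1 T := fun t ht => ((hT0 t).1 ht).1
  set A := ∑ t ∈ TG, (f t (x t) + ∑ i, lam t i * (ρ - c t (x t) i)) with hA
  have key : ∀ x' : X, (∑ t ∈ Finset.Icc 1 T, f t x') ≤ (A + RP + T0.card) / p := by
    intro x'
    rw [le_div_iff₀ hp0]
    -- split the sum over Icc into TG and T0
    have hsplit : ∑ t ∈ Finset.Icc 1 T, f t x'
        = ∑ t ∈ TG, f t x' + ∑ t ∈ T0, f t x' := by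
      rw [hTG]
      exact (Finset.sum_sdiff hT0sub).symm
    have hT0bound : ∑ t ∈ T0, f t x' ≤ (T0.card : ℝ) := by
      calc ∑ t ∈ T0, f t x' ≤ ∑ t ∈ T0, (1:ℝ) :=
            Finset.sum_le_sum (fun t ht => hf1 t (hT0sub ht) x')
        _ = T0.card := by simp
    -- per-round inequality over TG
    have hstep : p * (∑ t ∈ TG, f t x')
        ≤ p * (∑ t ∈ TG, (f t x' + ∑ i, lam t i * (ρ - c t x' i)))
          + (1 - p) * (∑ t ∈ TG, (f t x₀ + ∑ i, lam t i * (ρ - c t x₀ i))) := by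
      rw [Finset.mul_sum, Finset.mul_sum, Finset.mul_sum, ← Finset.sum_add_distrib]
      refine Finset.sum_le_sum (fun t ht => ?_)
      have htI := hTGsub ht
      have hterm : ∀ i : Fin m,
          0 ≤ p * (lam t i * (ρ - c t x' i)) + (1 - p) * (lam t i * (ρ - c t x₀ i)) := by
        intro i
        have hl := hlam t htI i
        have hc1 : c t x' i ≤ 1 := (abs_le.mp (hc t htI x' i)).2
        have hc0 : c t x₀ i ≤ -β := hcx₀ t htI i
        nlinarith [mul_le_mul_of_nonneg_left (by linarith : ρ - 1 ≤ ρ - c t x' i)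
            (mul_nonneg hp0.le hl),
          mul_le_mul_of_nonneg_left (by linarith : ρ + β ≤ ρ - c t x₀ i)
            (mul_nonneg (by linarith : (0:ℝ) ≤ 1 - p) hl)]
      have hsum0 : 0 ≤ ∑ i, (p * (lam t i * (ρ - c t x' i))
          + (1 - p) * (lam t i * (ρ - c t x₀ i))) :=
        Finset.sum_nonneg (fun i _ => hterm i)
      rw [Finset.sum_add_distrib, ← Finset.mul_sum, ← Finset.mul_sum] at hsum0
      have hf0' : 0 ≤ f t x₀ := hf0 t htI x₀
      nlinarith
    have hprim := hprimal x' p hp0.le hp1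
    have hcard : p * (T0.card : ℝ) ≤ (T0.card : ℝ) := by
      nlinarith [Nat.cast_nonneg (α := ℝ) T0.card]
    calc (∑ t ∈ Finset.Icc 1 T, f t x') * p
        = p * (∑ t ∈ TG, f t x') + p * (∑ t ∈ T0, f t x') := by
          rw [hsplit]; ring
      _ ≤ p * (∑ t ∈ TG, f t x') + p * (T0.card : ℝ) := by
          have := mul_le_mul_of_nonneg_left hT0bound hp0.le
          linarith
      _ ≤ (A + RP) + (T0.card : ℝ) := by
          have := hstep
          linarith
      _ = A + RP + (T0.card : ℝ) := by ring
  have hsup : (⨆ x' : X, ∑ t ∈ Finset.Icc 1 T, f t x') ≤ (A + RP + T0.card) / p :=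
    ciSup_le key
  have hmul : p * (⨆ x' : X, ∑ t ∈ Finset.Icc 1 T, f t x') ≤ A + RP + (T0.card : ℝ) := by
    have := mul_le_mul_of_nonneg_left hsup hp0.le
    rwa [mul_div_cancel₀ _ (ne_of_gt hp0)] at this
  rw [ge_iff_le]

  linarith
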